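/- Let (P_0, …, P_{n−1}) be a cycle for a rational map with good reduction outside S, and let i, j be coprime integers. Then for every prime p ∉ S, min{δ_p(P_0, P_i), δ_p(P_0, P_j)} = δ_p(P_0, P_1) (indices mod n). -/

import Mathlib

open IsDedekindDomain
open scoped Classical
set_option linter.unusedSectionVars false
set_option maxHeartbeats 1000000

variable {K : Type*}

/-- The normalized additive `p`-adic valuation on `K`, with `v_p(0) = ∞`. -/
noncomputable def addValp [Field K] [NumberField K]
    (p : HeightOneSpectrum (NumberField.RingOfIntegers K)) (x : K) : WithTop ℤ :=
  if hx : x = 0 then ⊤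
  else ((- Multiplicative.toAdd (WithZero.unzero (((p.valuation K).ne_zero_iff).mpr hx)) : ℤ) :
    WithTop ℤ)

/-- The `p`-adic logarithmic distance between points of `ℙ¹(K)` with homogeneous
coordinates `P` and `Q`. -/
noncomputable def deltap [Field K] [NumberField K]
    (p : HeightOneSpectrum (NumberField.RingOfIntegers K)) (P Q : K × K) : WithTop ℤ :=
  addValp p (P.1 * Q.2 - Q.1 * P.2) - min (addValp p P.1) (addValp p P.2)
    - min (addValp p Q.1) (addValp p Q.2)

/-- Equality of coordinate pairs as points of `ℙ¹(K)`. -/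
def projEq [Field K] (P Q : K × K) : Prop :=
  ∃ l : K, l ≠ 0 ∧ Q.1 = l * P.1 ∧ Q.2 = l * P.2

instance heightOneSpectrum_isMaximal [Field K] [NumberField K]
    (p : HeightOneSpectrum (NumberField.RingOfIntegers K)) : p.asIdeal.IsMaximal :=
  Ring.DimensionLEOne.maximalOfPrime p.ne_bot p.isPrime

attribute [local instance] Ideal.Quotient.field

/-! ### WithTop ℤ arithmetic helpers -/

namespace CycleAux

open WithTop.LinearOrderedAddCommGroup in
theorem wt_sub_sub_comm (a b c : WithTop ℤ) : a - b - c = a - c - b := by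
  induction a using WithTop.recTopCoe with
  | top => simp
  | coe a =>
    induction b using WithTop.recTopCoe with
    | top => simp
    | coe b =>
      induction c using WithTop.recTopCoe with
      | top => simp
      | coe c => rw [← coe_sub, ← coe_sub, ← coe_sub, ← coe_sub]; congr 1; ring

open WithTop.LinearOrderedAddCommGroup in
theorem wt_add_cancel (c : ℤ) (A m1 m2 : WithTop ℤ) :
    ((c : WithTop ℤ) + A) - m1 - ((c : WithTop ℤ) + m2) = A - m1 - m2 := by
  induction A using WithTop.recTopCoe with
  | top => simp
  | coe a =>
    induction m1 using WithTop.recTopCoe with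
    | top => simp
    | coe b =>
      induction m2 using WithTop.recTopCoe with
      | top => simp [← WithTop.coe_add]
      | coe m =>
        rw [← WithTop.coe_add, ← WithTop.coe_add, ← coe_sub, ← coe_sub, ← coe_sub, ← coe_sub]
        congr 1; ring

open WithTop.LinearOrderedAddCommGroup in
theorem wt_sub_zero (a : WithTop ℤ) : a - 0 = a := by
  induction a using WithTop.recTopCoe with
  | top => simp
  | coe a => rw [← WithTop.coe_zero, ← coe_sub]; congr 1; ring

theorem wt_min_add (c : WithTop ℤ) (a b : WithTop ℤ) :
    min (c + a) (c + b) = c + min a b := by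
  rcases le_total a b with h | h
  · rw [min_eq_left h, min_eq_left (add_le_add le_rfl h)]
  · rw [min_eq_right h, min_eq_right (add_le_add le_rfl h)]

open WithTop.LinearOrderedAddCommGroup in
theorem wt_sub_le_sub (a b : WithTop ℤ) (c : WithTop ℤ) (h : a ≤ b) : a - c ≤ b - c := by
  induction c using WithTop.recTopCoe with
  | top => simp
  | coe c =>
    induction b using WithTop.recTopCoe with
    | top => simp
    | coe b =>
      induction a using WithTop.recTopCoe with
      | top => exact absurd h (by simp)
      | coe a =>
        rw [← coe_sub, ← coe_sub, WithTop.coe_le_coe]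
        exact sub_le_sub_right (WithTop.coe_le_coe.mp h) c

/-! ### Valuation lemmas -/

variable [Field K] [NumberField K] (p : HeightOneSpectrum (NumberField.RingOfIntegers K))

theorem addValp_zero : addValp p (0:K) = ⊤ := dif_pos rfl

theorem addValp_of_ne {x : K} (hx : x ≠ 0) :
    addValp p x = ((- Multiplicative.toAdd (WithZero.unzero
      (((p.valuation K).ne_zero_iff).mpr hx)) : ℤ) : WithTop ℤ) := dif_neg hx

theorem addValp_eq_top {x : K} : addValp p x = ⊤ ↔ x = 0 := by
  constructor
  · intro h
    by_contra hx
    rw [addValp_of_ne p hx] at h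
    exact (WithTop.coe_ne_top h)
  · rintro rfl; exact addValp_zero p

theorem addValp_ne_top {x : K} (hx : x ≠ 0) : addValp p x ≠ ⊤ :=
  fun h => hx ((addValp_eq_top p).mp h)

theorem le_iff {x y : K} (hx : x ≠ 0) (hy : y ≠ 0) :
    addValp p x ≤ addValp p y ↔ (p.valuation K) y ≤ (p.valuation K) x := by
  rw [addValp_of_ne p hx, addValp_of_ne p hy, WithTop.coe_le_coe, neg_le_neg_iff,
    Multiplicative.toAdd_le, ← WithZero.coe_le_coe, WithZero.coe_unzero, WithZero.coe_unzero]

theorem lt_iff {x y : K} (hx : x ≠ 0) (hy : y ≠ 0) :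
    addValp p x < addValp p y ↔ (p.valuation K) y < (p.valuation K) x := by
  rw [← not_le, ← not_le, le_iff p hy hx]

theorem addValp_mul {x y : K} (hx : x ≠ 0) (hy : y ≠ 0) :
    addValp p (x * y) = addValp p x + addValp p y := by
  have hxy : x * y ≠ 0 := mul_ne_zero hx hy
  rw [addValp_of_ne p hx, addValp_of_ne p hy, addValp_of_ne p hxy]
  rw [← WithTop.coe_add]
  congr 1
  have : ((p.valuation K) (x*y) : WithZero (Multiplicative ℤ)) = (p.valuation K) x * (p.valuation K) y :=
    Valuation.map_mul _ _ _
  have h2 : WithZero.unzero (((p.valuation K).ne_zero_iff).mpr hxy)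
      = WithZero.unzero (((p.valuation K).ne_zero_iff).mpr hx) *
        WithZero.unzero (((p.valuation K).ne_zero_iff).mpr hy) := by
    apply WithZero.coe_inj.mp
    push_cast [WithZero.coe_unzero]
    exact this
  rw [h2, toAdd_mul]; ring

theorem addValp_mul_total (x y : K) :
    addValp p (x * y) = addValp p x + addValp p y := by
  rcases eq_or_ne x 0 with rfl | hx
  · simp [addValp_zero]
  rcases eq_or_ne y 0 with rfl | hy
  · simp [addValp_zero]
  exact addValp_mul p hx hy

theorem addValp_one : addValp p (1:K) = 0 := by
  rw [addValp_of_ne p one_ne_zero]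
  norm_cast
  have : WithZero.unzero (((p.valuation K).ne_zero_iff).mpr (one_ne_zero : (1:K) ≠ 0)) = 1 := by
    apply WithZero.coe_inj.mp
    rw [WithZero.coe_unzero, Valuation.map_one]; rfl
  rw [this]; simp

theorem addValp_min_le_add (x y : K) :
    min (addValp p x) (addValp p y) ≤ addValp p (x + y) := by
  rcases eq_or_ne x 0 with rfl | hx
  · simp [addValp_zero]
  rcases eq_or_ne y 0 with rfl | hy
  · simp [addValp_zero]
  rcases eq_or_ne (x+y) 0 with h | hxy
  · rw [h, addValp_zero]; exact le_top
  have := Valuation.map_add (p.valuation K) x y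
  rcases le_max_iff.mp this with h' | h'
  · exact min_le_of_left_le ((le_iff p hx hxy).mpr h')
  · exact min_le_of_right_le ((le_iff p hy hxy).mpr h')

theorem addValp_neg (x : K) : addValp p (-x) = addValp p x := by
  rcases eq_or_ne x 0 with rfl | hx
  · simp
  have hnx : -x ≠ 0 := neg_ne_zero.mpr hx
  have h2 : WithZero.unzero (((p.valuation K).ne_zero_iff).mpr hnx)
      = WithZero.unzero (((p.valuation K).ne_zero_iff).mpr hx) :=
    WithZero.coe_inj.mp (by rw [WithZero.coe_unzero, WithZero.coe_unzero, Valuation.map_neg])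
  rw [addValp_of_ne p hnx, addValp_of_ne p hx, h2]

theorem addValp_sub_ge (x y : K) {c : WithTop ℤ}
    (hx : c ≤ addValp p x) (hy : c ≤ addValp p y) : c ≤ addValp p (x - y) := by
  rw [sub_eq_add_neg]
  refine le_trans ?_ (addValp_min_le_add p x (-y))
  rw [addValp_neg]
  exact le_min hx hy

theorem addValp_algebraMap_nonneg (a : NumberField.RingOfIntegers K) :
    0 ≤ addValp p (algebraMap _ K a) := by
  rcases eq_or_ne (algebraMap _ K a) 0 with h | h
  · rw [h, addValp_zero]; exact le_top
  have h1 : (p.valuation K) (algebraMap _ K a) ≤ 1 := p.valuation_le_one a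
  have := (le_iff p one_ne_zero h).mpr (by rwa [Valuation.map_one])
  rwa [addValp_one] at this

theorem addValp_pos_of_mem {a : NumberField.RingOfIntegers K} (ha : a ∈ p.asIdeal) :
    0 < addValp p (algebraMap _ K a) := by
  rcases eq_or_ne (algebraMap _ K a) 0 with h | h0
  · rw [h, addValp_zero]; exact WithTop.coe_lt_top 0
  have h1 : (p.valuation K) (algebraMap _ K a) < 1 := by
    rw [p.valuation_lt_one_iff_dvd]
    exact Ideal.dvd_span_singleton.mpr ha
  have := (lt_iff p one_ne_zero h0).mpr (by rwa [Valuation.map_one])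
  rwa [addValp_one] at this

theorem exists_addValp_eq (m : ℤ) : ∃ x : K, x ≠ 0 ∧ addValp p x = (m : WithTop ℤ) := by
  obtain ⟨π, hπ⟩ := p.valuation_exists_uniformizer K
  have hπ0 : π ≠ 0 := by
    intro h; rw [h, Valuation.map_zero] at hπ; exact WithZero.zero_ne_coe hπ
  refine ⟨π ^ m, zpow_ne_zero _ hπ0, ?_⟩
  have hval : (p.valuation K) (π ^ m) = (Multiplicative.ofAdd (-m : ℤ) : Multiplicative ℤ) := by
    rw [map_zpow₀, hπ, WithZero.exp, ← WithZero.coe_zpow]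
    congr 1
    rw [← ofAdd_zsmul]
    congr 1
    rw [smul_eq_mul]; ring
  have hne : π ^ m ≠ 0 := zpow_ne_zero _ hπ0
  rw [addValp_of_ne p hne]
  congr 1
  have : WithZero.unzero (((p.valuation K).ne_zero_iff).mpr hne)
      = (Multiplicative.ofAdd (-m:ℤ)) := by
    apply WithZero.coe_inj.mp
    rw [WithZero.coe_unzero, hval]
  rw [this]
  simp

end CycleAux

namespace CycleAux

variable [Field K] [NumberField K] (p : HeightOneSpectrum (NumberField.RingOfIntegers K))

theorem prod_ne_zero_iff {P : K × K} : P ≠ 0 ↔ (P.1 ≠ 0 ∨ P.2 ≠ 0) := by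
  rw [← not_and_or]
  constructor
  · intro h hc; exact h (Prod.ext hc.1 hc.2)
  · intro h hc; exact h ⟨by rw [hc]; rfl, by rw [hc]; rfl⟩

theorem mv_ne_top {P : K × K} (hP : P ≠ 0) :
    min (addValp p P.1) (addValp p P.2) ≠ ⊤ := by
  rw [Ne, min_eq_top]
  rcases (prod_ne_zero_iff).mp hP with h | h
  · exact fun hc => addValp_ne_top p h hc.1
  · exact fun hc => addValp_ne_top p h hc.2

theorem deltap_comm (P Q : K × K) : deltap p P Q = deltap p Q P := by
  unfold deltap
  rw [show Q.1*P.2 - P.1*Q.2 = -(P.1*Q.2 - Q.1*P.2) by ring, addValp_neg, wt_sub_sub_comm]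

theorem deltap_smul_right (P Q : K × K) {l : K} (hl : l ≠ 0) :
    deltap p P (l * Q.1, l * Q.2) = deltap p P Q := by
  obtain ⟨c, hc⟩ := WithTop.ne_top_iff_exists.mp (addValp_ne_top p hl)
  unfold deltap
  have h1 : P.1 * (l * Q.2) - l * Q.1 * P.2 = l * (P.1 * Q.2 - Q.1 * P.2) := by ring
  rw [show ((l * Q.1, l * Q.2) : K × K).1 = l * Q.1 from rfl,
    show ((l * Q.1, l * Q.2) : K × K).2 = l * Q.2 from rfl, h1,
    addValp_mul_total, addValp_mul_total p l Q.1, addValp_mul_total p l Q.2,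
    wt_min_add, ← hc, wt_add_cancel]

theorem projEq_symm {P Q : K × K} (h : projEq P Q) : projEq Q P := by
  obtain ⟨l, hl, h1, h2⟩ := h
  exact ⟨l⁻¹, inv_ne_zero hl, by rw [h1]; field_simp, by rw [h2]; field_simp⟩

theorem projEq_trans {P Q T : K × K} (h : projEq P Q) (h' : projEq Q T) : projEq P T := by
  obtain ⟨l, hl, h1, h2⟩ := h
  obtain ⟨m, hm, h3, h4⟩ := h'
  exact ⟨m * l, mul_ne_zero hm hl, by rw [h3, h1, mul_assoc], by rw [h4, h2, mul_assoc]⟩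

theorem projEq_refl (P : K × K) : projEq P P := ⟨1, one_ne_zero, (one_mul _).symm, (one_mul _).symm⟩

theorem deltap_projEq_right (P : K × K) {Q Q' : K × K} (h : projEq Q Q') :
    deltap p P Q' = deltap p P Q := by
  obtain ⟨l, hl, h1, h2⟩ := h
  have : Q' = (l * Q.1, l * Q.2) := Prod.ext h1 h2
  rw [this, deltap_smul_right p P Q hl]

theorem deltap_projEq_left {P P' : K × K} (Q : K × K) (h : projEq P P') :
    deltap p P' Q = deltap p P Q := by
  rw [deltap_comm, deltap_projEq_right p Q h, deltap_comm]

theorem deltap_self (R : K × K) : deltap p R R = ⊤ := by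
  unfold deltap
  rw [show R.1 * R.2 - R.1 * R.2 = 0 by ring, addValp_zero]
  simp

/-- A representative of a point of `ℙ¹(K)` is normalized (w.r.t. `p`) if both coordinates are
`p`-integral and at least one is a `p`-unit. -/
def Normalized (P : K × K) : Prop :=
  0 ≤ addValp p P.1 ∧ 0 ≤ addValp p P.2 ∧
    min (addValp p P.1) (addValp p P.2) = 0

theorem Normalized.ne_zero {P : K × K} (h : Normalized p P) : P ≠ 0 := by
  intro hc
  have := h.2.2
  rw [hc] at this
  simp [addValp_zero] at this

theorem exists_normalized {P : K × K} (hP : P ≠ 0) :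
    ∃ Q, projEq P Q ∧ Normalized p Q := by
  obtain ⟨c, hc⟩ := WithTop.ne_top_iff_exists.mp (mv_ne_top p hP)
  obtain ⟨l, hl0, hl⟩ := exists_addValp_eq p (K := K) (-c)
  refine ⟨(l * P.1, l * P.2), ⟨l, hl0, rfl, rfl⟩, ?_⟩
  have h1 : addValp p (l * P.1) = (-c : ℤ) + addValp p P.1 := by
    rw [addValp_mul_total, hl]
  have h2 : addValp p (l * P.2) = (-c : ℤ) + addValp p P.2 := by
    rw [addValp_mul_total, hl]
  have hmin : min (addValp p (l * P.1)) (addValp p (l * P.2)) = 0 := by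
    rw [h1, h2, wt_min_add, ← hc, ← WithTop.coe_add]
    norm_num
  refine ⟨?_, ?_, hmin⟩
  · calc (0 : WithTop ℤ) = min _ _ := hmin.symm
      _ ≤ _ := min_le_left _ _
  · calc (0 : WithTop ℤ) = min _ _ := hmin.symm
      _ ≤ _ := min_le_right _ _

theorem deltap_eq_of_normalized {P Q : K × K} (hP : Normalized p P) (hQ : Normalized p Q) :
    deltap p P Q = addValp p (P.1 * Q.2 - Q.1 * P.2) := by
  unfold deltap
  rw [hP.2.2, hQ.2.2, wt_sub_zero, wt_sub_zero]

theorem deltap_triangle_normalized {P Q T : K × K}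
    (hP : Normalized p P) (hQ : Normalized p Q) (hT : Normalized p T) :
    min (deltap p P Q) (deltap p Q T) ≤ deltap p P T := by
  rw [deltap_eq_of_normalized p hP hQ, deltap_eq_of_normalized p hQ hT,
    deltap_eq_of_normalized p hP hT]
  have key : ∀ q ∈ ({Q.1, Q.2} : Set K), addValp p q = 0 →
      min (addValp p (P.1 * Q.2 - Q.1 * P.2)) (addValp p (Q.1 * T.2 - T.1 * Q.2))
        ≤ addValp p (P.1 * T.2 - T.1 * P.2) := by
    rintro q hq hq0
    have hcross : addValp p (P.1 * T.2 - T.1 * P.2) = addValp p (q * (P.1 * T.2 - T.1 * P.2)) := by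
      rw [addValp_mul_total, hq0, zero_add]
    rcases hq with rfl | hq
    · -- q = Q.1
      have hid : Q.1 * (P.1 * T.2 - T.1 * P.2)
          = (P.1 * Q.2 - Q.1 * P.2) * T.1 + (Q.1 * T.2 - T.1 * Q.2) * P.1 := by ring
      rw [hcross, hid]
      refine le_trans (le_min ?_ ?_) (addValp_min_le_add p _ _)
      · rw [addValp_mul_total]
        exact min_le_of_left_le (le_add_of_nonneg_right hT.1)
      · rw [addValp_mul_total]
        exact min_le_of_right_le (le_add_of_nonneg_right hP.1)
    · -- q = Q.2
      rcases hq with rfl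
      have hid : Q.2 * (P.1 * T.2 - T.1 * P.2)
          = (P.1 * Q.2 - Q.1 * P.2) * T.2 + (Q.1 * T.2 - T.1 * Q.2) * P.2 := by ring
      rw [hcross, hid]
      refine le_trans (le_min ?_ ?_) (addValp_min_le_add p _ _)
      · rw [addValp_mul_total]
        exact min_le_of_left_le (le_add_of_nonneg_right hT.2.1)
      · rw [addValp_mul_total]
        exact min_le_of_right_le (le_add_of_nonneg_right hP.2.1)
  rcases min_eq_iff.mp hQ.2.2 with ⟨h0, _⟩ | ⟨h0, _⟩
  · exact key Q.1 (Set.mem_insert _ _) h0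
  · exact key Q.2 (Set.mem_insert_of_mem _ rfl) h0

theorem deltap_triangle {P Q T : K × K} (hP : P ≠ 0) (hQ : Q ≠ 0) (hT : T ≠ 0) :
    min (deltap p P Q) (deltap p Q T) ≤ deltap p P T := by
  obtain ⟨P', hPP', hP'⟩ := exists_normalized p hP
  obtain ⟨Q', hQQ', hQ'⟩ := exists_normalized p hQ
  obtain ⟨T', hTT', hT'⟩ := exists_normalized p hT
  rw [← deltap_projEq_left p Q hPP', ← deltap_projEq_right p P' hQQ',
    ← deltap_projEq_left p T hQQ', ← deltap_projEq_right p Q' hTT',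
    ← deltap_projEq_left p T hPP']
  rw [show deltap p P' T = deltap p P' T' from (deltap_projEq_right p P' hTT').symm]
  exact deltap_triangle_normalized p hP' hQ' hT'

end CycleAux


namespace CycleAux

noncomputable section Descent
open MvPolynomial
variable {k : Type*} [Field k]
variable {L : Type*} [Field L] [Algebra k L] (f : L →ₗ[k] k)

def phi (q : MvPolynomial (Fin 2) L) : MvPolynomial (Fin 2) k :=
  AddMonoidAlgebra.ofCoeff (Finsupp.mapRange f f.map_zero (AddMonoidAlgebra.coeff q))

theorem coeff_phi (m) (q : MvPolynomial (Fin 2) L) :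
    MvPolynomial.coeff m (phi f q) = f (MvPolynomial.coeff m q) := by
  unfold phi MvPolynomial.coeff; exact Finsupp.mapRange_apply (hf := f.map_zero)

theorem phi_add (q r : MvPolynomial (Fin 2) L) : phi f (q + r) = phi f q + phi f r := by
  apply MvPolynomial.ext
  intro m
  simp [coeff_phi, MvPolynomial.coeff_add]

theorem phi_mul_map (q : MvPolynomial (Fin 2) L) (W : MvPolynomial (Fin 2) k) :
    phi f (q * MvPolynomial.map (algebraMap k L) W) = phi f q * W := by
  apply MvPolynomial.ext
  intro m
  rw [coeff_phi, MvPolynomial.coeff_mul, MvPolynomial.coeff_mul, map_sum]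
  apply Finset.sum_congr rfl
  intro x hx
  rw [coeff_phi, MvPolynomial.coeff_map, mul_comm, ← Algebra.smul_def, f.map_smul,
    smul_eq_mul, mul_comm]

theorem phi_one (hf1 : f 1 = 1) : phi f (1 : MvPolynomial (Fin 2) L) = 1 := by
  apply MvPolynomial.ext
  intro m
  rw [coeff_phi]
  by_cases hm : m = 0
  · subst hm; simp [hf1]
  · rw [MvPolynomial.coeff_one, MvPolynomial.coeff_one,
      if_neg (fun h => hm h.symm), if_neg (fun h => hm h.symm), map_zero]

theorem phi_map (hf1 : f 1 = 1) (W : MvPolynomial (Fin 2) k) :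
    phi f (MvPolynomial.map (algebraMap k L) W) = W := by
  have := phi_mul_map f 1 W
  rw [one_mul, phi_one f hf1, one_mul] at this
  exact this

theorem nullstellensatz_pair (F G : MvPolynomial (Fin 2) k)
    (hroot : ∀ a b : AlgebraicClosure k, (a, b) ≠ 0 →
      ¬ (MvPolynomial.aeval ![a, b] F = 0 ∧ MvPolynomial.aeval ![a, b] G = 0)) :
    ∀ i : Fin 2, ∃ (N : ℕ) (A B : MvPolynomial (Fin 2) k),
      A * F + B * G = (X i) ^ N := by
  intro i
  set L' := AlgebraicClosure k
  set φ := algebraMap k L'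
  set I : Ideal (MvPolynomial (Fin 2) L') := Ideal.span {map φ F, map φ G} with hI
  have hzl : ∀ x ∈ zeroLocus L' I, x = 0 := by
    intro x hx
    have hF0 : eval x (map φ F) = 0 := hx _ (Ideal.subset_span (Set.mem_insert _ _))
    have hG0 : eval x (map φ G) = 0 := hx _ (Ideal.subset_span (Set.mem_insert_of_mem _ rfl))
    have hxeq : ![x 0, x 1] = x := by
      funext j
      fin_cases j <;> simp
    by_contra hx0
    refine hroot (x 0) (x 1) ?_ ⟨?_, ?_⟩
    · intro hc
      apply hx0
      funext j
      have h0 : x 0 = 0 := congrArg Prod.fst hc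
      have h1 : x 1 = 0 := congrArg Prod.snd hc
      fin_cases j <;> simp [h0, h1]
    · rw [aeval_def, ← eval_map, hxeq]; exact hF0
    · rw [aeval_def, ← eval_map, hxeq]; exact hG0
  have hXmem : (X i : MvPolynomial (Fin 2) L') ∈ I.radical := by
    rw [← vanishingIdeal_zeroLocus_eq_radical (K := L')]
    intro x hx
    rw [hzl x hx]
    simp
  obtain ⟨N, hN⟩ := Ideal.mem_radical_iff.mp hXmem
  rw [hI, Ideal.mem_span_pair] at hN
  obtain ⟨A, B, hAB⟩ := hN
  obtain ⟨f, hf⟩ := LinearMap.exists_leftInverse_of_injective (Algebra.linearMap k L')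
    (LinearMap.ker_eq_bot.mpr (by exact (algebraMap k L').injective))
  have hf1 : f 1 = 1 := by
    have := congrArg (fun g => g 1) hf
    simpa using this
  refine ⟨N, phi f A, phi f B, ?_⟩
  have happ := congrArg (phi f) hAB
  have hXN : (X i ^ N : MvPolynomial (Fin 2) L')
      = MvPolynomial.map φ ((X i : MvPolynomial (Fin 2) k) ^ N) := by
    rw [map_pow, MvPolynomial.map_X]
  rw [phi_add, phi_mul_map, phi_mul_map, hXN, phi_map f hf1] at happ
  exact happ

end Descent

/-! ### Valuations of polynomial evaluations -/

section Eval
open MvPolynomial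
variable [Field K] [NumberField K] (p : HeightOneSpectrum (NumberField.RingOfIntegers K))

theorem addValp_pow_nonneg {x : K} (hx : 0 ≤ addValp p x) (e : ℕ) :
    0 ≤ addValp p (x ^ e) := by
  induction e with
  | zero => rw [pow_zero, addValp_one]
  | succ e ih =>
    rw [pow_succ, addValp_mul_total]
    exact add_nonneg ih hx

theorem addValp_pow_eq_zero {x : K} (hx : addValp p x = 0) (e : ℕ) :
    addValp p (x ^ e) = 0 := by
  induction e with
  | zero => rw [pow_zero, addValp_one]
  | succ e ih => rw [pow_succ, addValp_mul_total, ih, hx, add_zero]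

theorem addValp_prod02 {x : Fin 2 → K} (hx : ∀ i, 0 ≤ addValp p (x i)) (m : Fin 2 →₀ ℕ) :
    0 ≤ addValp p (∏ i, x i ^ m i) := by
  rw [Fin.prod_univ_two, addValp_mul_total]
  exact add_nonneg (addValp_pow_nonneg p (hx 0) _) (addValp_pow_nonneg p (hx 1) _)

theorem addValp_sum_ge {α : Type*} (s : Finset α) (g : α → K) {c : WithTop ℤ}
    (h : ∀ a ∈ s, c ≤ addValp p (g a)) : c ≤ addValp p (∑ a ∈ s, g a) := by
  induction s using Finset.cons_induction with
  | empty => rw [Finset.sum_empty, addValp_zero]; exact le_top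
  | cons a s ha ih =>
    rw [Finset.sum_cons]
    refine le_trans (le_min (h a (Finset.mem_cons_self a s)) ?_) (addValp_min_le_add p _ _)
    exact ih fun b hb => h b (Finset.mem_cons_of_mem hb)

theorem addValp_aeval_ge (H : MvPolynomial (Fin 2) (NumberField.RingOfIntegers K))
    {x : Fin 2 → K} (hx : ∀ i, 0 ≤ addValp p (x i)) {c : WithTop ℤ}
    (hc : ∀ m, c ≤ addValp p (algebraMap _ K (H.coeff m))) :
    c ≤ addValp p (MvPolynomial.aeval x H) := by
  rw [aeval_def, eval₂_eq']
  apply addValp_sum_ge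
  intro m hm
  rw [addValp_mul_total]
  calc c = c + 0 := (add_zero c).symm
    _ ≤ _ := add_le_add (hc m) (addValp_prod02 p hx m)

theorem addValp_aeval_nonneg (H : MvPolynomial (Fin 2) (NumberField.RingOfIntegers K))
    {x : Fin 2 → K} (hx : ∀ i, 0 ≤ addValp p (x i)) :
    0 ≤ addValp p (MvPolynomial.aeval x H) :=
  addValp_aeval_ge p H hx fun m => addValp_algebraMap_nonneg p _

theorem addValp_pow_sub_pow {t s : K} {e : WithTop ℤ} (ht : 0 ≤ addValp p t)
    (hs : 0 ≤ addValp p s) (h : e ≤ addValp p (t - s)) (j : ℕ) :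
    e ≤ addValp p (t ^ j - s ^ j) := by
  induction j with
  | zero => rw [pow_zero, pow_zero, sub_self, addValp_zero]; exact le_top
  | succ j ih =>
    have hid : t ^ (j+1) - s ^ (j+1) = t * (t ^ j - s ^ j) + (t - s) * s ^ j := by ring
    rw [hid]
    refine le_trans (le_min ?_ ?_) (addValp_min_le_add p _ _)
    · rw [addValp_mul_total]
      calc e = 0 + e := (zero_add e).symm
        _ ≤ _ := add_le_add ht ih
    · rw [addValp_mul_total]
      calc e = e + 0 := (add_zero e).symm
        _ ≤ _ := add_le_add h (addValp_pow_nonneg p hs j)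

theorem addValp_aeval_sub (H : MvPolynomial (Fin 2) (NumberField.RingOfIntegers K))
    {y z : Fin 2 → K} {e : WithTop ℤ}
    (hy : ∀ i, 0 ≤ addValp p (y i)) (hz : ∀ i, 0 ≤ addValp p (z i))
    (h : ∀ i, e ≤ addValp p (y i - z i)) :
    e ≤ addValp p (MvPolynomial.aeval y H - MvPolynomial.aeval z H) := by
  rw [aeval_def, aeval_def, eval₂_eq', eval₂_eq', ← Finset.sum_sub_distrib]
  apply addValp_sum_ge
  intro m hm
  have hid : (algebraMap _ K (H.coeff m)) * ∏ i, y i ^ m i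
      - (algebraMap _ K (H.coeff m)) * ∏ i, z i ^ m i
      = (algebraMap _ K (H.coeff m)) * ((∏ i, y i ^ m i) - ∏ i, z i ^ m i) := by ring
  rw [hid, addValp_mul_total]
  have hprod : e ≤ addValp p ((∏ i, y i ^ m i) - ∏ i, z i ^ m i) := by
    rw [Fin.prod_univ_two, Fin.prod_univ_two]
    have hid2 : y 0 ^ m 0 * y 1 ^ m 1 - z 0 ^ m 0 * z 1 ^ m 1
        = y 0 ^ m 0 * (y 1 ^ m 1 - z 1 ^ m 1) + (y 0 ^ m 0 - z 0 ^ m 0) * (z 1 ^ m 1) := by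
      ring
    rw [hid2]
    refine le_trans (le_min ?_ ?_) (addValp_min_le_add p _ _)
    · rw [addValp_mul_total]
      calc e = 0 + e := (zero_add e).symm
        _ ≤ _ := add_le_add (addValp_pow_nonneg p (hy 0) _)
          (addValp_pow_sub_pow p (hy 1) (hz 1) (h 1) _)
    · rw [addValp_mul_total]
      calc e = e + 0 := (add_zero e).symm
        _ ≤ _ := add_le_add (addValp_pow_sub_pow p (hy 0) (hz 0) (h 0) _)
          (addValp_pow_nonneg p (hz 1) _)
  calc e = 0 + e := (zero_add e).symm
    _ ≤ _ := add_le_add (addValp_algebraMap_nonneg p _) hprod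

theorem aeval_hom_smul {R : Type*} [CommRing R] {S : Type*} [CommRing S] [Algebra R S]
    (H : MvPolynomial (Fin 2) R) {d : ℕ} (hH : H.IsHomogeneous d)
    (l : S) (x : Fin 2 → S) :
    MvPolynomial.aeval (fun i => l * x i) H = l ^ d * MvPolynomial.aeval x H := by
  rw [aeval_def, aeval_def, eval₂_eq', eval₂_eq', Finset.mul_sum]
  apply Finset.sum_congr rfl
  intro m hm
  have hdeg : ∑ i, m i = d := by
    have h1 := hH (MvPolynomial.mem_support_iff.mp hm)
    rw [← h1, Finsupp.weight_apply]
    rw [Finsupp.sum]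
    rw [Finset.sum_subset (Finset.subset_univ m.support)]
    · apply Finset.sum_congr rfl
      intro i _
      simp
    · intro i _ hi
      rw [Finsupp.notMem_support_iff.mp hi]
      simp
  have hprod : ∏ i, (l * x i) ^ m i = l ^ d * ∏ i, x i ^ m i := by
    rw [← hdeg]
    rw [Finset.prod_congr rfl (fun i _ => mul_pow l (x i) (m i)), Finset.prod_mul_distrib,
      Finset.prod_pow_eq_pow_sum]
  rw [hprod]; ring

end Eval
end CycleAux

/-- A rational map of `ℙ¹`, given by a pair `(F, G)` of homogeneous polynomials of the same
degree with coefficients in the ring of integers, has good reduction at the prime `p` if some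
coefficient of `F` or `G` is a `p`-adic unit and the reductions of `F` and `G` modulo `p` have
no common nontrivial root in the algebraic closure of the residue field (so that the reduced
map has the same degree). -/
def goodReductionAt [Field K] [NumberField K]
    (p : HeightOneSpectrum (NumberField.RingOfIntegers K))
    (F G : MvPolynomial (Fin 2) (NumberField.RingOfIntegers K)) : Prop :=
  (∃ m, F.coeff m ∉ p.asIdeal ∨ G.coeff m ∉ p.asIdeal) ∧
  ∀ a b : AlgebraicClosure (NumberField.RingOfIntegers K ⧸ p.asIdeal), (a, b) ≠ 0 →
    ¬ (MvPolynomial.aeval ![a, b] (MvPolynomial.map (Ideal.Quotient.mk p.asIdeal) F) = 0 ∧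
       MvPolynomial.aeval ![a, b] (MvPolynomial.map (Ideal.Quotient.mk p.asIdeal) G) = 0)

namespace CycleAux

open MvPolynomial

theorem wt_one_le_of_pos {a : WithTop ℤ} (h : 0 < a) : (1 : WithTop ℤ) ≤ a := by
  induction a using WithTop.recTopCoe with
  | top => exact le_top
  | coe a =>
    rw [show ((1:WithTop ℤ)) = ((1:ℤ) : WithTop ℤ) from rfl, WithTop.coe_le_coe]
    rw [show ((0:WithTop ℤ)) = ((0:ℤ) : WithTop ℤ) from rfl, WithTop.coe_lt_coe] at h
    omega

variable [Field K] [NumberField K] (p : HeightOneSpectrum (NumberField.RingOfIntegers K))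

theorem goodRed_not_both_pos
    {F G : MvPolynomial (Fin 2) (NumberField.RingOfIntegers K)}
    (hgood : goodReductionAt p F G)
    {x : Fin 2 → K} (hx0 : ∀ i, 0 ≤ addValp p (x i)) (i₀ : Fin 2)
    (hxmin : addValp p (x i₀) = 0) :
    ¬ (0 < addValp p (MvPolynomial.aeval x F) ∧ 0 < addValp p (MvPolynomial.aeval x G)) := by
  rintro ⟨hFpos, hGpos⟩
  -- Nullstellensatz over the residue field
  obtain ⟨N, A, B, hAB⟩ := nullstellensatz_pair
    (MvPolynomial.map (Ideal.Quotient.mk p.asIdeal) F)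
    (MvPolynomial.map (Ideal.Quotient.mk p.asIdeal) G) hgood.2 i₀
  obtain ⟨A', hA'⟩ := MvPolynomial.map_surjective _ Ideal.Quotient.mk_surjective A
  obtain ⟨B', hB'⟩ := MvPolynomial.map_surjective _ Ideal.Quotient.mk_surjective B
  set E : MvPolynomial (Fin 2) (NumberField.RingOfIntegers K) :=
    A' * F + B' * G - (X i₀) ^ N with hE
  have hmapE : MvPolynomial.map (Ideal.Quotient.mk p.asIdeal) E = 0 := by
    rw [hE, map_sub, map_add, map_mul, map_mul, map_pow, MvPolynomial.map_X, hA', hB', hAB]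
    ring
  have hcoeffE : ∀ m, E.coeff m ∈ p.asIdeal := by
    intro m
    have := congrArg (MvPolynomial.coeff m) hmapE
    rw [MvPolynomial.coeff_map, MvPolynomial.coeff_zero] at this
    exact (Ideal.Quotient.eq_zero_iff_mem).mp this
  have hvalE : (1 : WithTop ℤ) ≤ addValp p (MvPolynomial.aeval x E) := by
    apply addValp_aeval_ge p E hx0
    intro m
    rcases eq_or_ne (E.coeff m) 0 with h | h
    · rw [h, map_zero, addValp_zero]; exact le_top
    · exact wt_one_le_of_pos (addValp_pos_of_mem p (hcoeffE m))
  have heval : (x i₀ : K) ^ N = MvPolynomial.aeval x A' * MvPolynomial.aeval x F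
      + MvPolynomial.aeval x B' * MvPolynomial.aeval x G - MvPolynomial.aeval x E := by
    rw [hE]
    rw [map_sub, map_add, map_mul, map_mul, map_pow, MvPolynomial.aeval_X]
    ring
  have hpos : 0 < addValp p ((x i₀) ^ N) := by
    rw [heval]
    have h1 : 0 < addValp p (MvPolynomial.aeval x A' * MvPolynomial.aeval x F) := by
      rw [addValp_mul_total]
      exact lt_of_lt_of_le hFpos (le_add_of_nonneg_left (addValp_aeval_nonneg p A' hx0))
    have h2 : 0 < addValp p (MvPolynomial.aeval x B' * MvPolynomial.aeval x G) := by
      rw [addValp_mul_total]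
      exact lt_of_lt_of_le hGpos (le_add_of_nonneg_left (addValp_aeval_nonneg p B' hx0))
    have h3 : (0 : WithTop ℤ) < 1 := by
      rw [show ((0:WithTop ℤ)) = ((0:ℤ) : WithTop ℤ) from rfl,
        show ((1:WithTop ℤ)) = ((1:ℤ) : WithTop ℤ) from rfl, WithTop.coe_lt_coe]
      omega
    set c := min (addValp p (MvPolynomial.aeval x A' * MvPolynomial.aeval x F))
      (min (addValp p (MvPolynomial.aeval x B' * MvPolynomial.aeval x G)) (1 : WithTop ℤ)) with hc
    have hcpos : 0 < c := lt_min h1 (lt_min h2 h3)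
    refine lt_of_lt_of_le hcpos ?_
    apply addValp_sub_ge
    · refine le_trans (le_min (min_le_left _ _) ?_) (addValp_min_le_add p _ _)
      exact le_trans (min_le_right _ _) (min_le_left _ _)
    · exact le_trans (le_trans (min_le_right _ _) (min_le_right _ _)) hvalE
  rw [addValp_pow_eq_zero p hxmin N] at hpos
  exact lt_irrefl _ hpos

theorem goodRed_min_aeval_eq_zero
    {F G : MvPolynomial (Fin 2) (NumberField.RingOfIntegers K)}
    (hgood : goodReductionAt p F G)
    {x : Fin 2 → K} (hx0 : ∀ i, 0 ≤ addValp p (x i)) (i₀ : Fin 2)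
    (hxmin : addValp p (x i₀) = 0) :
    min (addValp p (MvPolynomial.aeval x F)) (addValp p (MvPolynomial.aeval x G)) = 0 := by
  have h1 : 0 ≤ min (addValp p (MvPolynomial.aeval x F))
      (addValp p (MvPolynomial.aeval x G)) :=
    le_min (addValp_aeval_nonneg p F hx0) (addValp_aeval_nonneg p G hx0)
  refine le_antisymm ?_ h1
  by_contra hlt
  rw [not_le] at hlt
  exact goodRed_not_both_pos p hgood hx0 i₀ hxmin (lt_min_iff.mp hlt)

end CycleAux

namespace CycleAux
open MvPolynomial
variable [Field K] [NumberField K] (p : HeightOneSpectrum (NumberField.RingOfIntegers K))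

theorem addValp_inv {x : K} (hx : x ≠ 0) : addValp p x⁻¹ + addValp p x = 0 := by
  rw [← addValp_mul_total, inv_mul_cancel₀ hx, addValp_one]

theorem exists_lambda {x y : K × K} (hx : Normalized p x) (hy : Normalized p y) :
    ∃ l : K, 0 ≤ addValp p l ∧
      addValp p (x.1 * y.2 - y.1 * x.2) ≤ addValp p (y.1 - l * x.1) ∧
      addValp p (x.1 * y.2 - y.1 * x.2) ≤ addValp p (y.2 - l * x.2) := by
  set e := addValp p (x.1 * y.2 - y.1 * x.2) with he
  rcases min_eq_iff.mp hx.2.2 with ⟨h0, _⟩ | ⟨h0, _⟩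
  · -- addValp p x.1 = 0
    have hx1 : x.1 ≠ 0 := by
      intro hc; rw [hc, addValp_zero] at h0; exact (by simp : (⊤ : WithTop ℤ) ≠ 0) h0
    refine ⟨y.1 / x.1, ?_, ?_, ?_⟩
    · have hmul : addValp p (y.1 / x.1) + addValp p x.1 = addValp p y.1 := by
        rw [← addValp_mul_total, div_mul_cancel₀ _ hx1]
      rw [h0, add_zero] at hmul
      rw [hmul]; exact hy.1
    · rw [show y.1 - y.1 / x.1 * x.1 = 0 by field_simp; ring, addValp_zero]; exact le_top
    · have hid : y.2 - y.1 / x.1 * x.2 = (x.1 * y.2 - y.1 * x.2) * x.1⁻¹ := by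
        field_simp
      rw [hid, addValp_mul_total]
      have hinv : addValp p x.1⁻¹ = 0 := by
        have := addValp_inv p hx1
        rw [h0, add_zero] at this; exact this
      rw [hinv, add_zero]
  · -- addValp p x.2 = 0
    have hx2 : x.2 ≠ 0 := by
      intro hc; rw [hc, addValp_zero] at h0; exact (by simp : (⊤ : WithTop ℤ) ≠ 0) h0
    refine ⟨y.2 / x.2, ?_, ?_, ?_⟩
    · have hmul : addValp p (y.2 / x.2) + addValp p x.2 = addValp p y.2 := by
        rw [← addValp_mul_total, div_mul_cancel₀ _ hx2]
      rw [h0, add_zero] at hmul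
      rw [hmul]; exact hy.2.1
    · have hid : y.1 - y.2 / x.2 * x.1 = -((x.1 * y.2 - y.1 * x.2) * x.2⁻¹) := by
        field_simp; ring
      rw [hid, addValp_neg, addValp_mul_total]
      have hinv : addValp p x.2⁻¹ = 0 := by
        have := addValp_inv p hx2
        rw [h0, add_zero] at this; exact this
      rw [hinv, add_zero]
    · rw [show y.2 - y.2 / x.2 * x.2 = 0 by field_simp; ring, addValp_zero]; exact le_top

theorem deltap_le_step
    {F G : MvPolynomial (Fin 2) (NumberField.RingOfIntegers K)} {d : ℕ}
    (hF : F.IsHomogeneous d) (hG : G.IsHomogeneous d)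
    (hgood : goodReductionAt p F G)
    {x y : K × K} (hx : Normalized p x) (hy : Normalized p y) :
    deltap p x y ≤ deltap p
      (MvPolynomial.aeval ![x.1, x.2] F, MvPolynomial.aeval ![x.1, x.2] G)
      (MvPolynomial.aeval ![y.1, y.2] F, MvPolynomial.aeval ![y.1, y.2] G) := by
  set xf : Fin 2 → K := ![x.1, x.2] with hxf
  set yf : Fin 2 → K := ![y.1, y.2] with hyf
  have hxf0 : ∀ i, 0 ≤ addValp p (xf i) := by
    intro i; fin_cases i
    · exact hx.1
    · exact hx.2.1
  have hyf0 : ∀ i, 0 ≤ addValp p (yf i) := by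
    intro i; fin_cases i
    · exact hy.1
    · exact hy.2.1
  obtain ⟨ix, hix⟩ : ∃ i, addValp p (xf i) = 0 := by
    rcases min_eq_iff.mp hx.2.2 with ⟨h0, _⟩ | ⟨h0, _⟩
    · exact ⟨0, h0⟩
    · exact ⟨1, h0⟩
  obtain ⟨iy, hiy⟩ : ∃ i, addValp p (yf i) = 0 := by
    rcases min_eq_iff.mp hy.2.2 with ⟨h0, _⟩ | ⟨h0, _⟩
    · exact ⟨0, h0⟩
    · exact ⟨1, h0⟩
  set e := addValp p (x.1 * y.2 - y.1 * x.2) with he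
  obtain ⟨l, hl0, hl1, hl2⟩ := exists_lambda p hx hy
  set z : Fin 2 → K := fun i => l * xf i with hz
  have hz0 : ∀ i, 0 ≤ addValp p (z i) := by
    intro i
    rw [hz, addValp_mul_total]
    exact add_nonneg hl0 (hxf0 i)
  have hdiff : ∀ i, e ≤ addValp p (yf i - z i) := by
    intro i; fin_cases i
    · simpa [hz, hxf, hyf] using hl1
    · simpa [hz, hxf, hyf] using hl2
  have hrF : e ≤ addValp p (MvPolynomial.aeval yf F - l ^ d * MvPolynomial.aeval xf F) := by
    rw [← aeval_hom_smul F hF l xf]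
    exact addValp_aeval_sub p F hyf0 hz0 hdiff
  have hrG : e ≤ addValp p (MvPolynomial.aeval yf G - l ^ d * MvPolynomial.aeval xf G) := by
    rw [← aeval_hom_smul G hG l xf]
    exact addValp_aeval_sub p G hyf0 hz0 hdiff
  have hcross : e ≤ addValp p (MvPolynomial.aeval xf F * MvPolynomial.aeval yf G
      - MvPolynomial.aeval yf F * MvPolynomial.aeval xf G) := by
    have hid : MvPolynomial.aeval xf F * MvPolynomial.aeval yf G
        - MvPolynomial.aeval yf F * MvPolynomial.aeval xf G
        = MvPolynomial.aeval xf F *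
            (MvPolynomial.aeval yf G - l ^ d * MvPolynomial.aeval xf G)
          - (MvPolynomial.aeval yf F - l ^ d * MvPolynomial.aeval xf F) *
            MvPolynomial.aeval xf G := by ring
    rw [hid]
    apply addValp_sub_ge
    · rw [addValp_mul_total]
      calc e = 0 + e := (zero_add e).symm
        _ ≤ _ := add_le_add (addValp_aeval_nonneg p F hxf0) hrG
    · rw [addValp_mul_total]
      calc e = e + 0 := (add_zero e).symm
        _ ≤ _ := add_le_add hrF (addValp_aeval_nonneg p G hxf0)
  have hnx : Normalized p (MvPolynomial.aeval xf F, MvPolynomial.aeval xf G) := by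
    have hmin := goodRed_min_aeval_eq_zero p hgood hxf0 ix hix
    exact ⟨addValp_aeval_nonneg p F hxf0, addValp_aeval_nonneg p G hxf0, hmin⟩
  have hny : Normalized p (MvPolynomial.aeval yf F, MvPolynomial.aeval yf G) := by
    have hmin := goodRed_min_aeval_eq_zero p hgood hyf0 iy hiy
    exact ⟨addValp_aeval_nonneg p F hyf0, addValp_aeval_nonneg p G hyf0, hmin⟩
  rw [deltap_eq_of_normalized p hx hy, deltap_eq_of_normalized p hnx hny]
  exact hcross

end CycleAux

open CycleAux in
/-- if `(P 0, …, P (n-1))` is a cycle for a rational map `Φ = [F : G]` with good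
reduction outside `S` and `i, j` are coprime integers, then for every prime `p ∉ S`,
`min (δ_p(P 0, P i)) (δ_p(P 0, P j)) = δ_p(P 0, P 1)`. -/
theorem min_deltap_coprime_indices [Field K] [NumberField K]
    (S : Finset (HeightOneSpectrum (NumberField.RingOfIntegers K)))
    (F G : MvPolynomial (Fin 2) (NumberField.RingOfIntegers K)) (d : ℕ) (hd : 1 ≤ d)
    (hF : F.IsHomogeneous d) (hG : G.IsHomogeneous d)
    (hFG : ∀ a b : K, MvPolynomial.aeval ![a, b] F = 0 → MvPolynomial.aeval ![a, b] G = 0 →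
      (a, b) = 0)
    (hgood : ∀ p ∉ S, goodReductionAt p F G)
    (n : ℕ) (hn : 1 ≤ n) (P : ℤ → K × K)
    (hP : ∀ i, P i ≠ 0)
    (hstep : ∀ i : ℤ, ∃ l : K, l ≠ 0 ∧
      MvPolynomial.aeval ![(P i).1, (P i).2] F = l * (P (i + 1)).1 ∧
      MvPolynomial.aeval ![(P i).1, (P i).2] G = l * (P (i + 1)).2)
    (hper : ∀ i : ℤ, projEq (P i) (P (i + n)))
    (hdist : ∀ i j : ℤ, 0 ≤ i → i < j → j < n → ¬ projEq (P i) (P j))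
    (i j : ℤ) (hij : IsCoprime i j) :
    ∀ p ∉ S, min (deltap p (P 0) (P i)) (deltap p (P 0) (P j)) = deltap p (P 0) (P 1) := by
  intro p hp
  have hgood' := hgood p hp
  -- one application of Φ does not decrease the distance
  have step : ∀ a b : ℤ, deltap p (P a) (P b) ≤ deltap p (P (a+1)) (P (b+1)) := by
    intro a b
    obtain ⟨x, hPx, hx⟩ := exists_normalized p (hP a)
    obtain ⟨y, hPy, hy⟩ := exists_normalized p (hP b)
    obtain ⟨μ, hμ0, hμ1, hμ2⟩ := id hPx
    obtain ⟨ν, hν0, hν1, hν2⟩ := id hPy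
    obtain ⟨la, hla0, hlaF, hlaG⟩ := hstep a
    obtain ⟨lb, hlb0, hlbF, hlbG⟩ := hstep b
    have hxf : (![x.1, x.2] : Fin 2 → K) = fun t => μ * (![(P a).1, (P a).2] t) := by
      funext t; fin_cases t <;> simp [hμ1, hμ2]
    have hyf : (![y.1, y.2] : Fin 2 → K) = fun t => ν * (![(P b).1, (P b).2] t) := by
      funext t; fin_cases t <;> simp [hν1, hν2]
    have hFx : MvPolynomial.aeval ![x.1, x.2] F = (μ^d * la) * (P (a+1)).1 := by
      rw [hxf, aeval_hom_smul F hF, hlaF]; ring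
    have hGx : MvPolynomial.aeval ![x.1, x.2] G = (μ^d * la) * (P (a+1)).2 := by
      rw [hxf, aeval_hom_smul G hG, hlaG]; ring
    have hFy : MvPolynomial.aeval ![y.1, y.2] F = (ν^d * lb) * (P (b+1)).1 := by
      rw [hyf, aeval_hom_smul F hF, hlbF]; ring
    have hGy : MvPolynomial.aeval ![y.1, y.2] G = (ν^d * lb) * (P (b+1)).2 := by
      rw [hyf, aeval_hom_smul G hG, hlbG]; ring
    have hprojx : projEq (P (a+1))
        (MvPolynomial.aeval ![x.1, x.2] F, MvPolynomial.aeval ![x.1, x.2] G) :=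
      ⟨μ^d * la, mul_ne_zero (pow_ne_zero d hμ0) hla0, hFx, hGx⟩
    have hprojy : projEq (P (b+1))
        (MvPolynomial.aeval ![y.1, y.2] F, MvPolynomial.aeval ![y.1, y.2] G) :=
      ⟨ν^d * lb, mul_ne_zero (pow_ne_zero d hν0) hlb0, hFy, hGy⟩
    calc deltap p (P a) (P b) = deltap p (P a) y := (deltap_projEq_right p (P a) hPy).symm
      _ = deltap p x y := (deltap_projEq_left p y hPx).symm
      _ ≤ _ := deltap_le_step p hF hG hgood' hx hy
      _ = deltap p (P (a+1))
          (MvPolynomial.aeval ![y.1, y.2] F, MvPolynomial.aeval ![y.1, y.2] G) :=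
        deltap_projEq_left p _ hprojx
      _ = deltap p (P (a+1)) (P (b+1)) := deltap_projEq_right p _ hprojy
  -- shift invariance around the cycle
  have inv : ∀ m k : ℤ, deltap p (P k) (P (k + m)) = deltap p (P 0) (P m) := by
    intro m
    set g : ℤ → WithTop ℤ := fun k => deltap p (P k) (P (k + m)) with hg
    have gstep : ∀ k, g k ≤ g (k + 1) := by
      intro k
      have := step k (k + m)
      have harg : P (k + m + 1) = P (k + 1 + m) := congrArg P (by ring)
      rw [harg] at this
      exact this
    have gper : ∀ k, g (k + (n:ℤ)) = g k := by
      intro k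
      show deltap p (P (k + n)) (P (k + (n:ℤ) + m)) = deltap p (P k) (P (k + m))
      have harg : P (k + (n:ℤ) + m) = P ((k + m) + (n:ℤ)) := congrArg P (by ring)
      rw [harg, deltap_projEq_right p _ (hper (k + m)), deltap_projEq_left p _ (hper k)]
    have gmono : ∀ (k : ℤ) (t : ℕ), g k ≤ g (k + t) := by
      intro k t
      induction t with
      | zero => simp
      | succ t ih =>
        refine le_trans ih ?_
        have := gstep (k + t)
        have harg : (k + (t:ℤ)) + 1 = k + ((t:ℤ) + 1) := by ring
        rw [harg] at this
        push_cast
        exact this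
    have geq : ∀ k, g k = g (k + 1) := by
      intro k
      refine le_antisymm (gstep k) ?_
      have h1 : g (k + 1) ≤ g (k + 1 + ((n - 1 : ℕ) : ℤ)) := gmono (k + 1) (n - 1)
      have harg : k + 1 + ((n - 1 : ℕ) : ℤ) = k + (n:ℤ) := by
        have : ((n - 1 : ℕ) : ℤ) = (n : ℤ) - 1 := by
          have : 1 ≤ n := hn
          omega
        rw [this]; ring
      rw [harg, gper] at h1
      exact h1
    have gzero : ∀ k : ℤ, g k = g 0 := by
      intro k
      induction k using Int.induction_on with
      | zero => rfl
      | succ k ih =>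
        have h1 : g ((k:ℤ) + 1) = g k := (geq k).symm
        rw [h1]; exact ih
      | pred k ih =>
        have h1 := geq (-(k:ℤ) - 1)
        have harg : (-(k:ℤ) - 1) + 1 = -(k:ℤ) := by ring
        rw [harg] at h1
        rw [h1]; exact ih
    intro k
    have := gzero k
    simpa [hg] using this
  set D : ℤ → WithTop ℤ := fun m => deltap p (P 0) (P m) with hD
  have inv' : ∀ (m k : ℤ), deltap p (P k) (P (k + m)) = D m := by
    intro m k
    rw [inv m k]
  have Dper : ∀ m : ℤ, D (m + n) = D m := by
    intro m
    show deltap p (P 0) (P (m + n)) = deltap p (P 0) (P m)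
    rw [deltap_projEq_right p _ (hper m)]
  have Dneg : ∀ m : ℤ, D (-m) = D m := by
    intro m
    have h1 := inv' (-m) m
    have harg : m + (-m) = (0:ℤ) := by ring
    rw [harg] at h1
    rw [← h1, deltap_comm]
  have Dadd : ∀ a b : ℤ, min (D a) (D b) ≤ D (a + b) := by
    intro a b
    have htri := deltap_triangle p (hP 0) (hP a) (hP (a + b))
    rw [inv' b a] at htri
    exact htri
  have Dself : D 0 = ⊤ := deltap_self p (P 0)
  have Dmuln : ∀ (a : ℕ) (m : ℤ), D m ≤ D (a * m) := by
    intro a m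
    induction a with
    | zero => simp [Dself]
    | succ a ih =>
      have harg : (((a:ℕ) + 1 : ℕ) : ℤ) * m = (a:ℤ) * m + m := by push_cast; ring
      rw [harg]
      exact le_trans (le_min ih (le_refl _)) (Dadd _ _)
  have Dmul : ∀ (a m : ℤ), D m ≤ D (a * m) := by
    intro a m
    rcases Int.natAbs_eq a with h | h
    · rw [h]; exact Dmuln _ m
    · rw [h, show (-(a.natAbs:ℤ)) * m = -((a.natAbs:ℤ) * m) by ring, Dneg]
      exact Dmuln _ m
  have Dge1n : ∀ r : ℕ, D 1 ≤ D r := by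
    intro r
    induction r with
    | zero => simp [Dself]
    | succ r ih =>
      have harg : (((r:ℕ) + 1 : ℕ) : ℤ) = 1 + (r:ℤ) := by push_cast; ring
      rw [harg]
      exact le_trans (le_min (le_refl _) ih) (Dadd 1 r)
  have Dpern : ∀ (q : ℤ) (m : ℤ), D (m + q * n) = D m := by
    intro q
    induction q using Int.induction_on with
    | zero => intro m; simp
    | succ q ih =>
      intro m
      have harg : m + ((q:ℤ) + 1) * n = (m + q * n) + n := by ring
      rw [harg, Dper, ih]
    | pred q ih =>
      intro m
      have h1 := ih (m - n)
      have harg : m - (n:ℤ) + (-(q:ℤ)) * n = m + (-(q:ℤ) - 1) * n := by ring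
      rw [harg] at h1
      rw [h1]
      have h2 := Dper (m - n)
      have harg2 : m - (n:ℤ) + n = m := by ring
      rw [harg2] at h2
      exact h2.symm
  have Dge1 : ∀ m : ℤ, D 1 ≤ D m := by
    intro m
    have hn0 : (n:ℤ) ≠ 0 := by exact_mod_cast Nat.one_le_iff_ne_zero.mp hn
    have hmod : m % (n:ℤ) + (m / (n:ℤ)) * n = m := Int.emod_add_ediv_mul m n
    have h1 : D m = D (m % (n:ℤ)) := by
      rw [← Dpern (m / (n:ℤ)) (m % (n:ℤ)), hmod]
    have hnn : 0 ≤ m % (n:ℤ) := Int.emod_nonneg m hn0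
    have h2 : (m % (n:ℤ)) = ((m % (n:ℤ)).toNat : ℤ) := (Int.toNat_of_nonneg hnn).symm
    rw [h1, h2]
    exact Dge1n _
  -- conclusion
  obtain ⟨a, b, hab⟩ := hij
  refine le_antisymm ?_ (le_min (Dge1 i) (Dge1 j))
  have h1 : min (D (a * i)) (D (b * j)) ≤ D (a * i + b * j) := Dadd _ _
  rw [hab] at h1
  exact le_trans (le_min (le_trans (min_le_left _ _) (Dmul a i))
    (le_trans (min_le_right _ _) (Dmul b j))) h1
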